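/- arXiv:2106.02957 — 4 statements merged into one kernel-verified Lean document; each statement's English description precedes it below -/
import Mathlib

section
/- Let s, ξ, η₁, η₂ be real numbers, set Δ := √(ξ² + η₁² + η₂²), and assume Δ > 0. Set a := (cosh(sΔ/√2) + ξ·sinh(sΔ/√2)/Δ)^(−1/2) and z := a·(iη₁ − η₂)·sinh(sΔ/√2)/Δ, and let p := [[a, z], [0, a⁻¹]]. Then p·pᴴ = exp(A), where A := (s/√2)·[[−ξ, iη₁−η₂], [−iη₁−η₂, ξ]] and pᴴ denotes the conjugate transpose of p. -/
open Matrix Complex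

lemma exp_M (t ξ η₁ η₂ Δ : ℝ) (hΔ : 0 < Δ) (hΔ2 : Δ ^ 2 = ξ ^ 2 + η₁ ^ 2 + η₂ ^ 2) :
    NormedSpace.exp (((t : ℝ) : ℂ) • !![(-ξ : ℂ), I * η₁ - η₂; -I * η₁ - η₂, (ξ : ℂ)]) =
      !![((Real.cosh (t * Δ) : ℂ)) - ξ * Real.sinh (t * Δ) / Δ,
          (I * η₁ - η₂) * Real.sinh (t * Δ) / Δ;
         (-I * η₁ - η₂) * Real.sinh (t * Δ) / Δ,
          ((Real.cosh (t * Δ) : ℂ)) + ξ * Real.sinh (t * Δ) / Δ] := by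
  have hΔ0 : (Δ : ℂ) ≠ 0 := by exact_mod_cast hΔ.ne'
  by_cases hβ : η₁ = 0 ∧ η₂ = 0
  · obtain ⟨h1, h2⟩ := hβ
    subst h1 h2
    have hΔξ : Δ ^ 2 = ξ ^ 2 := by simpa using hΔ2
    have hdiag : ((t : ℝ) : ℂ) • !![(-ξ : ℂ), I * ((0:ℝ):ℂ) - ((0:ℝ):ℂ); -I * ((0:ℝ):ℂ) - ((0:ℝ):ℂ), (ξ : ℂ)] =
        diagonal ![((-(t * ξ) : ℝ) : ℂ), ((t * ξ : ℝ) : ℂ)] := by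
      ext i j
      fin_cases i <;> fin_cases j <;>
        simp [Matrix.diagonal] <;> push_cast <;> ring
    rw [hdiag, Matrix.exp_diagonal]
    have hexp : ∀ x : ℝ, NormedSpace.exp ((x : ℂ)) = ((Real.exp x : ℝ) : ℂ) := by
      intro x
      rw [← Complex.exp_eq_exp_ℂ, ← Complex.ofReal_exp]
    rcases sq_eq_sq_iff_eq_or_eq_neg.mp hΔξ.symm with h | h <;>
    · ext i j
      fin_cases i <;> fin_cases j <;>
        simp [Matrix.diagonal, h, ← Complex.exp_eq_exp_ℂ] <;> push_cast <;> field_simp <;>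
      first
        | linear_combination (Complex.cosh_sub_sinh ((t:ℂ)*Δ))
        | linear_combination (Complex.cosh_add_sinh ((t:ℂ)*Δ))
        | linear_combination ((Δ:ℂ)) * (Complex.cosh_sub_sinh ((t:ℂ)*Δ))
        | linear_combination ((Δ:ℂ)) * (Complex.cosh_add_sinh ((t:ℂ)*Δ))
        | linear_combination (-(Δ:ℂ)) * (Complex.cosh_sub_sinh ((t:ℂ)*Δ))
        | linear_combination (-(Δ:ℂ)) * (Complex.cosh_add_sinh ((t:ℂ)*Δ))
        | ring1
        | linear_combination -(Complex.cosh_sub_sinh ((t:ℂ)*Δ))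
        | linear_combination -(Complex.cosh_add_sinh ((t:ℂ)*Δ))
  · -- generic case: β ≠ 0
    have hΔ2C : (Δ:ℂ) ^ 2 = (ξ:ℂ) ^ 2 + (η₁:ℂ) ^ 2 + (η₂:ℂ) ^ 2 := by exact_mod_cast hΔ2
    have hβ0 : (I * (η₁:ℂ) - (η₂:ℂ)) ≠ 0 := by
      intro h
      rw [Complex.ext_iff] at h
      simp [Complex.ext_iff] at h
      exact hβ ⟨h.2, by simpa using h.1⟩
    have hββ : (-I * (η₁:ℂ) - η₂) * (I * η₁ - η₂) = (Δ:ℂ) ^ 2 - (ξ:ℂ) ^ 2 := by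
      linear_combination (-((η₁:ℂ)^2)) * Complex.I_sq - hΔ2C
    set P : Matrix (Fin 2) (Fin 2) ℂ :=
      !![I * (η₁:ℂ) - η₂, I * (η₁:ℂ) - η₂; (ξ:ℂ) + Δ, (ξ:ℂ) - Δ] with hP
    have hdet : P.det = -(2 * Δ) * (I * (η₁:ℂ) - η₂) := by
      simp [hP, Matrix.det_fin_two_of]; ring
    have hdet0 : IsUnit P.det := by
      rw [hdet]
      exact (mul_ne_zero (by simp [hΔ.ne']) hβ0).isUnit
    have hPunit : IsUnit P := (Matrix.isUnit_iff_isUnit_det P).mpr hdet0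
    haveI : Invertible P := P.invertibleOfIsUnitDet hdet0
    set D : Matrix (Fin 2) (Fin 2) ℂ := diagonal ![((t * Δ : ℝ):ℂ), ((-(t * Δ) : ℝ):ℂ)] with hD
    have hconj : P * D * P⁻¹ =
        ((t : ℝ) : ℂ) • !![(-ξ : ℂ), I * η₁ - η₂; -I * η₁ - η₂, (ξ : ℂ)] := by
      rw [Matrix.mul_inv_eq_iff_eq_mul_of_invertible]
      ext i j
      fin_cases i <;> fin_cases j <;>
        simp [hP, hD, Matrix.mul_apply, Fin.sum_univ_two, Matrix.diagonal] <;> push_cast <;>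
        first
          | ring1
          | linear_combination ((t:ℂ)) * hββ
          | linear_combination (-(t:ℂ)) * hββ
          | linear_combination ((t:ℂ)) * hΔ2C + ((t:ℂ) * (η₁:ℂ) ^ 2) * Complex.I_sq
          | linear_combination (-(t:ℂ)) * hΔ2C + (-((t:ℂ) * (η₁:ℂ) ^ 2)) * Complex.I_sq
    have hexpD : NormedSpace.exp D =
        diagonal ![((Real.exp (t * Δ) : ℝ):ℂ), ((Real.exp (-(t * Δ)) : ℝ):ℂ)] := by
      rw [hD, Matrix.exp_diagonal]
      ext i j
      fin_cases i <;> fin_cases j <;>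
        simp [Matrix.diagonal, ← Complex.exp_eq_exp_ℂ, Complex.ofReal_exp]
    have hEp : ((Real.exp (t * Δ) : ℝ) : ℂ)
        = ((Real.cosh (t * Δ) : ℝ) : ℂ) + ((Real.sinh (t * Δ) : ℝ) : ℂ) := by
      exact_mod_cast congrArg (Complex.ofReal) (Real.cosh_add_sinh (t * Δ)).symm
    have hEm : ((Real.exp (-(t * Δ)) : ℝ) : ℂ)
        = ((Real.cosh (t * Δ) : ℝ) : ℂ) - ((Real.sinh (t * Δ) : ℝ) : ℂ) := by
      exact_mod_cast congrArg (Complex.ofReal) (Real.cosh_sub_sinh (t * Δ)).symm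
    rw [← hconj, Matrix.exp_conj P D hPunit, hexpD,
      Matrix.mul_inv_eq_iff_eq_mul_of_invertible]
    generalize hQ1 : ((Real.exp (t * Δ) : ℝ) : ℂ) = Ep at hEp ⊢
    generalize hQ2 : ((Real.exp (-(t * Δ)) : ℝ) : ℂ) = Em at hEm ⊢
    generalize hQ3 : ((Real.cosh (t * Δ) : ℝ) : ℂ) = C at hEp hEm ⊢
    generalize hQ4 : ((Real.sinh (t * Δ) : ℝ) : ℂ) = S at hEp hEm ⊢
    ext i j
    fin_cases i <;> fin_cases j <;>
      simp [hP, Matrix.mul_apply, Fin.sum_univ_two, Matrix.diagonal] <;>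
      field_simp <;>
      first
        | ring1
        | linear_combination ((I * (η₁:ℂ) - η₂) * (Δ:ℂ)) * hEp
        | linear_combination (-((I * (η₁:ℂ) - η₂) * (Δ:ℂ))) * hEp
        | linear_combination ((I * (η₁:ℂ) - η₂) * (Δ:ℂ)) * hEm
        | linear_combination (-((I * (η₁:ℂ) - η₂) * (Δ:ℂ))) * hEm
        | linear_combination ((Δ:ℂ) * ((ξ:ℂ) + Δ)) * hEp - S * hββ
        | linear_combination (-((Δ:ℂ) * ((ξ:ℂ) + Δ))) * hEp + S * hββ
        | linear_combination ((Δ:ℂ) * ((ξ:ℂ) - Δ)) * hEm - S * hββ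
        | linear_combination (-((Δ:ℂ) * ((ξ:ℂ) - Δ))) * hEm + S * hββ
        | linear_combination ((I * (η₁:ℂ) - η₂)) * hEp
        | linear_combination (-(I * (η₁:ℂ) - η₂)) * hEp
        | linear_combination ((I * (η₁:ℂ) - η₂)) * hEm
        | linear_combination (-(I * (η₁:ℂ) - η₂)) * hEm
        | linear_combination ((Δ:ℂ)) * hEp
        | linear_combination ((Δ:ℂ)) * hEm

/-- The coordinate formula for `p = E_s(λ)`:  `p · pᴴ = exp(A)`. -/
theorem Es_coordinates (s ξ η₁ η₂ : ℝ) (Δ : ℝ)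
    (hΔdef : Δ = Real.sqrt (ξ ^ 2 + η₁ ^ 2 + η₂ ^ 2)) (hΔ : 0 < Δ)
    (a : ℝ)
    (ha : a = (Real.cosh (s * Δ / Real.sqrt 2) +
        ξ * Real.sinh (s * Δ / Real.sqrt 2) / Δ) ^ (-(1 / 2) : ℝ))
    (z : ℂ)
    (hz : z = (a : ℂ) * (I * η₁ - η₂) * Real.sinh (s * Δ / Real.sqrt 2) / Δ)
    (p : Matrix (Fin 2) (Fin 2) ℂ)
    (hp : p = !![(a : ℂ), z; 0, (a : ℂ)⁻¹]) :
    p * pᴴ =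
      NormedSpace.exp
        (((s : ℂ) / Real.sqrt 2) •
          !![(-ξ : ℂ), I * η₁ - η₂; -I * η₁ - η₂, (ξ : ℂ)]) := by
  have hs2 : (0:ℝ) < Real.sqrt 2 := by positivity
  set r := s * Δ / Real.sqrt 2 with hr
  have hΔ2 : Δ ^ 2 = ξ ^ 2 + η₁ ^ 2 + η₂ ^ 2 := by
    rw [hΔdef]; exact Real.sq_sqrt (by positivity)
  have hΔ0 : (Δ:ℂ) ≠ 0 := by exact_mod_cast hΔ.ne'
  have hΔ2C : (Δ:ℂ) ^ 2 = (ξ:ℂ) ^ 2 + (η₁:ℂ) ^ 2 + (η₂:ℂ) ^ 2 := by exact_mod_cast hΔ2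
  have hξ2 : ξ ^ 2 ≤ Δ ^ 2 := by nlinarith [sq_nonneg η₁, sq_nonneg η₂]
  have hc : 0 < Real.cosh r := Real.cosh_pos _
  have hcs : Real.sinh r ^ 2 < Real.cosh r ^ 2 := by
    rw [Real.cosh_sq]; nlinarith
  have hnum : 0 < Real.cosh r * Δ + ξ * Real.sinh r := by
    have e1 : ξ ^ 2 * Real.sinh r ^ 2 ≤ Δ ^ 2 * Real.sinh r ^ 2 :=
      mul_le_mul_of_nonneg_right hξ2 (sq_nonneg _)
    have hprod : 0 < (Real.cosh r * Δ + ξ * Real.sinh r) * (Real.cosh r * Δ - ξ * Real.sinh r) := by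
      nlinarith [e1, mul_lt_mul_of_pos_left hcs (mul_pos hΔ hΔ)]
    nlinarith [mul_pos hc hΔ]
  have hden : 0 < Real.cosh r + ξ * Real.sinh r / Δ := by
    have := div_pos hnum hΔ
    have heq : (Real.cosh r * Δ + ξ * Real.sinh r) / Δ
        = Real.cosh r + ξ * Real.sinh r / Δ := by
      field_simp
    linarith [heq ▸ this]
  have hapos : 0 < a := ha ▸ Real.rpow_pos_of_pos hden _
  have ha0 : ((a:ℝ):ℂ) ≠ 0 := by exact_mod_cast hapos.ne'
  have ha2 : a ^ 2 = (Real.cosh r + ξ * Real.sinh r / Δ)⁻¹ := by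
    rw [ha, ← Real.rpow_natCast _ 2, ← Real.rpow_mul hden.le]
    norm_num [Real.rpow_neg_one]
  have hxR : a ^ 2 * (Real.cosh r * Δ + ξ * Real.sinh r) = Δ := by
    have h1 : Real.cosh r * Δ + ξ * Real.sinh r
        = (Real.cosh r + ξ * Real.sinh r / Δ) * Δ := by field_simp
    rw [ha2, h1, ← mul_assoc, inv_mul_cancel₀ hden.ne', one_mul]
  have hxC : ((a:ℝ):ℂ) ^ 2 * (((Real.cosh r : ℝ):ℂ) * Δ + ξ * ((Real.sinh r : ℝ):ℂ)) = (Δ:ℂ) := by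
    exact_mod_cast congrArg (Complex.ofReal) hxR
  have hcoshC : ((Real.cosh r : ℝ):ℂ) ^ 2 = ((Real.sinh r : ℝ):ℂ) ^ 2 + 1 := by
    exact_mod_cast congrArg (Complex.ofReal) (Real.cosh_sq r)
  have hββ : (-I * (η₁:ℂ) - η₂) * (I * η₁ - η₂) = (Δ:ℂ) ^ 2 - (ξ:ℂ) ^ 2 := by
    linear_combination (-((η₁:ℂ) ^ 2)) * Complex.I_sq - hΔ2C
  have hM := exp_M (s / Real.sqrt 2) ξ η₁ η₂ Δ hΔ hΔ2
  have hrr : s / Real.sqrt 2 * Δ = r := by rw [hr]; ring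
  rw [hrr] at hM
  have hscalar : ((s:ℂ) / (Real.sqrt 2 : ℝ)) = ((s / Real.sqrt 2 : ℝ) : ℂ) := by
    push_cast; ring
  rw [hscalar, hM, hp, hz]
  generalize hC : ((Real.cosh r : ℝ):ℂ) = C at hxC hcoshC ⊢
  generalize hS : ((Real.sinh r : ℝ):ℂ) = S at hxC hcoshC ⊢
  have hSconj : (starRingEnd ℂ) S = S := by rw [← hS]; exact Complex.conj_ofReal _
  ext i j
  fin_cases i <;> fin_cases j <;>
    simp [Matrix.mul_apply, Fin.sum_univ_two, Matrix.conjTranspose_apply,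
      hSconj, Complex.conj_ofReal, _root_.map_mul, map_sub, map_div₀, Complex.conj_I] <;>
    field_simp <;>
    first
      | ring1
      | linear_combination hxC
      | linear_combination -hxC
      | linear_combination ((Δ:ℂ) * ((Δ:ℂ) * C - (ξ:ℂ) * S)) * hxC
          + (-(((a:ℝ):ℂ) ^ 2 * (Δ:ℂ) ^ 3)) * hcoshC
          + (-(((a:ℝ):ℂ) ^ 2 * (Δ:ℂ) * (η₁:ℂ) ^ 2 * S ^ 2)) * Complex.I_sq
          + (-(((a:ℝ):ℂ) ^ 2 * (Δ:ℂ) * S ^ 2)) * hΔ2C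
      | linear_combination (-((Δ:ℂ) * ((Δ:ℂ) * C - (ξ:ℂ) * S))) * hxC
          + ((((a:ℝ):ℂ) ^ 2 * (Δ:ℂ) ^ 3)) * hcoshC
          + ((((a:ℝ):ℂ) ^ 2 * (Δ:ℂ) * (η₁:ℂ) ^ 2 * S ^ 2)) * Complex.I_sq
          + ((((a:ℝ):ℂ) ^ 2 * (Δ:ℂ) * S ^ 2)) * hΔ2C
      | linear_combination ((Δ:ℂ) * C - (ξ:ℂ) * S) * hxC
          + (-(((a:ℝ):ℂ) ^ 2 * (Δ:ℂ) ^ 2)) * hcoshC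
          + (-(((a:ℝ):ℂ) ^ 2 * (η₁:ℂ) ^ 2 * S ^ 2)) * Complex.I_sq
          + (-(((a:ℝ):ℂ) ^ 2 * S ^ 2)) * hΔ2C
end

section
/- Let x := (1/(2√2))·[[0,1],[−1,0]], y := (i/(2√2))·[[0,1],[1,0]], t := (i/(2√2))·[[1,0],[0,−1]] be 2×2 complex matrices. Let ξ, η₁, η₂ be real numbers, not all zero, set Δ² := ξ² + η₁² + η₂², and let L := ξ·t + η₁·x + η₂·y. Define X_t := (√2/Δ²)·(η₂·x − η₁·y), X_x := (√2/Δ²)·(ξ·y − η₂·t), X_y := (√2/Δ²)·(η₁·t − ξ·x). Then the matrix commutators satisfy: [X_t, L] = t − (ξ/Δ²)·L, [X_x, L] = x − (η₁/Δ²)·L, and [X_y, L] = y − (η₂/Δ²)·L. -/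
set_option maxHeartbeats 1000000


open Matrix Complex

attribute [local instance] LieRing.ofAssociativeRing

/-- Formulas for the orthogonal projections of `t*, x*, y*` onto the tangent space of
the coadjoint orbit through `λ = ξt* + η₁x* + η₂y*`, expressed via commutators in `su(2)`. -/
theorem coadjoint_orbit_projections
    (x y t : Matrix (Fin 2) (Fin 2) ℂ)
    (hx : x = (1 / (2 * Real.sqrt 2) : ℂ) • !![0, 1; -1, 0])
    (hy : y = (I / (2 * Real.sqrt 2)) • !![0, 1; 1, 0])
    (ht : t = (I / (2 * Real.sqrt 2)) • !![1, 0; 0, -1])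
    (ξ η₁ η₂ : ℝ) (hne : ¬(ξ = 0 ∧ η₁ = 0 ∧ η₂ = 0))
    (Δsq : ℝ) (hΔsq : Δsq = ξ ^ 2 + η₁ ^ 2 + η₂ ^ 2)
    (L Xt Xx Xy : Matrix (Fin 2) (Fin 2) ℂ)
    (hL : L = (ξ : ℂ) • t + (η₁ : ℂ) • x + (η₂ : ℂ) • y)
    (hXt : Xt = ((Real.sqrt 2 / Δsq : ℝ) : ℂ) • ((η₂ : ℂ) • x - (η₁ : ℂ) • y))
    (hXx : Xx = ((Real.sqrt 2 / Δsq : ℝ) : ℂ) • ((ξ : ℂ) • y - (η₂ : ℂ) • t))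
    (hXy : Xy = ((Real.sqrt 2 / Δsq : ℝ) : ℂ) • ((η₁ : ℂ) • t - (ξ : ℂ) • x)) :
    Xt * L - L * Xt = t - ((ξ / Δsq : ℝ) : ℂ) • L ∧
    Xx * L - L * Xx = x - ((η₁ / Δsq : ℝ) : ℂ) • L ∧
    Xy * L - L * Xy = y - ((η₂ / Δsq : ℝ) : ℂ) • L := by
  have hΔ0 : Δsq ≠ 0 := by
    rcases not_and_or.mp hne with h | h
    · nlinarith [sq_nonneg η₁, sq_nonneg η₂, sq_pos_of_ne_zero h]
    · rcases not_and_or.mp h with h | h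
      · nlinarith [sq_nonneg ξ, sq_nonneg η₂, sq_pos_of_ne_zero h]
      · nlinarith [sq_nonneg ξ, sq_nonneg η₁, sq_pos_of_ne_zero h]
  have hΔ : (Δsq : ℂ) ≠ 0 := Complex.ofReal_ne_zero.mpr hΔ0
  have hΔ' : (ξ:ℂ)^2+(η₁:ℂ)^2+(η₂:ℂ)^2 ≠ 0 := by
    rw [hΔsq] at hΔ; push_cast at hΔ; exact hΔ
  have hs : (Real.sqrt 2 : ℂ) * (Real.sqrt 2 : ℂ) = 2 := by
    rw [← Complex.ofReal_mul, Real.mul_self_sqrt (by norm_num)]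
    norm_num
  have hs0 : (Real.sqrt 2 : ℂ) ≠ 0 := by
    intro h; rw [h] at hs; norm_num at hs
  have hs2 : (Real.sqrt 2 : ℂ) ^ 2 = 2 := by rw [sq]; exact hs
  have hs3 : (Real.sqrt 2 : ℂ) ^ 3 = 2 * Real.sqrt 2 := by rw [pow_succ, hs2]
  have hs4 : (Real.sqrt 2 : ℂ) ^ 4 = 4 := by
    rw [pow_succ, hs3, mul_assoc, hs]; norm_num
  have hs5 : (Real.sqrt 2 : ℂ) ^ 5 = 4 * Real.sqrt 2 := by rw [pow_succ, hs4]
  have hs6 : (Real.sqrt 2 : ℂ) ^ 6 = 8 := by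
    rw [pow_succ, hs5, mul_assoc, hs]; norm_num
  have hxy : ⁅x, y⁆ = ((Real.sqrt 2 : ℂ) / 2) • t := by
    subst hx hy ht
    ext i j
    fin_cases i <;> fin_cases j <;>
    · simp [Ring.lie_def, Matrix.mul_apply, Fin.sum_univ_succ]
      try field_simp
      try ring_nf
      try simp only [hs2, hs3, hs4, hs5, hs6, Complex.I_sq]
      try ring
      try norm_num
  have hyt : ⁅y, t⁆ = ((Real.sqrt 2 : ℂ) / 2) • x := by
    subst hx hy ht
    ext i j
    fin_cases i <;> fin_cases j <;>
    · simp [Ring.lie_def, Matrix.mul_apply, Fin.sum_univ_succ]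
      try field_simp
      try ring_nf
      try simp only [hs2, hs3, hs4, hs5, hs6, Complex.I_sq]
      try ring
      try norm_num
  have htx : ⁅t, x⁆ = ((Real.sqrt 2 : ℂ) / 2) • y := by
    subst hx hy ht
    ext i j
    fin_cases i <;> fin_cases j <;>
    · simp [Ring.lie_def, Matrix.mul_apply, Fin.sum_univ_succ]
      try field_simp
      try ring_nf
      try simp only [hs2, hs3, hs4, hs5, hs6, Complex.I_sq]
      try ring
      try norm_num
  have hyx : ⁅y, x⁆ = -(((Real.sqrt 2 : ℂ) / 2) • t) := by rw [← lie_skew, hxy]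
  have hty : ⁅t, y⁆ = -(((Real.sqrt 2 : ℂ) / 2) • x) := by rw [← lie_skew, hyt]
  have hxt : ⁅x, t⁆ = -(((Real.sqrt 2 : ℂ) / 2) • y) := by rw [← lie_skew, htx]
  refine ⟨?_, ?_, ?_⟩ <;>
  · rw [← Ring.lie_def, hL]
    first
      | rw [hXt] | rw [hXx] | rw [hXy]
    simp only [lie_add, add_lie, lie_smul, smul_lie, lie_sub, sub_lie, lie_self,
      hxy, hyx, hyt, hty, htx, hxt, smul_neg, smul_smul, smul_zero, zero_sub, sub_zero,
      zero_add, add_zero, neg_neg, push_cast]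
    rw [hΔsq]
    push_cast
    match_scalars <;>
    · try field_simp
      try ring_nf
      try simp only [hs2, hs3, hs4, hs5, hs6, Complex.I_sq]
      try ring
      try norm_num
end

section
/- Let s be a nonzero real number, let a > 0 and u, v be real numbers, set z := u + iv, and let p := [[a, z], [0, a⁻¹]]. Let x* := (s/√2)·[[0,i],[0,0]], y* := −(s/√2)·[[0,1],[0,0]], t* := (s/(2√2))·[[−1,0],[0,1]]. Then conjugation by p⁻¹ satisfies: p⁻¹·x*·p = a⁻²·x*, p⁻¹·y*·p = a⁻²·y*, and p⁻¹·t*·p = t* − (a⁻¹v)·x* + (a⁻¹u)·y*. -/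
set_option maxHeartbeats 1000000


open Matrix Complex

/-- The adjoint action `Ad_{p⁻¹}` of `p ∈ AN` on the basis `{x*, y*, t*}` of `𝔞𝔫`. -/
theorem Ad_p_inv_on_an (s : ℝ) (hs : s ≠ 0)
    (a u v : ℝ) (ha : 0 < a) (z : ℂ) (hz : z = u + I * v)
    (xs ys ts : Matrix (Fin 2) (Fin 2) ℂ)
    (hxs : xs = ((s : ℂ) / Real.sqrt 2) • !![0, I; 0, 0])
    (hys : ys = -(((s : ℂ) / Real.sqrt 2) • !![0, 1; 0, 0]))
    (hts : ts = ((s : ℂ) / (2 * Real.sqrt 2)) • !![-1, 0; 0, 1])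
    (p : Matrix (Fin 2) (Fin 2) ℂ) (hp : p = !![(a : ℂ), z; 0, (a : ℂ)⁻¹]) :
    p⁻¹ * xs * p = ((a ^ (-2 : ℤ) : ℝ) : ℂ) • xs ∧
    p⁻¹ * ys * p = ((a ^ (-2 : ℤ) : ℝ) : ℂ) • ys ∧
    p⁻¹ * ts * p = ts - ((a⁻¹ * v : ℝ) : ℂ) • xs + ((a⁻¹ * u : ℝ) : ℂ) • ys := by
  have ha0 : (a : ℂ) ≠ 0 := by exact_mod_cast ha.ne'
  have h2 : ((Real.sqrt 2 : ℝ) : ℂ) ≠ 0 := by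
    exact_mod_cast (Real.sqrt_pos.mpr (by norm_num)).ne'
  have hinv : p⁻¹ = !![(a : ℂ)⁻¹, -z; 0, (a : ℂ)] := by
    apply inv_eq_right_inv
    rw [hp]
    simp [Matrix.mul_fin_two, ha0, mul_comm, ← Matrix.one_fin_two]
  have hpow : ((a ^ (-2 : ℤ) : ℝ) : ℂ) = ((a : ℂ))⁻¹ * (a : ℂ)⁻¹ := by
    push_cast
    rw [_root_.zpow_neg, zpow_two, mul_inv]
  subst hxs hys hts hp hz
  rw [hinv, hpow]
  refine ⟨?_, ?_, ?_⟩ <;>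
  · ext i j
    fin_cases i <;> fin_cases j <;>
      simp [Matrix.mul_apply, Fin.sum_univ_two] <;>
      · field_simp [ha0, h2]
        all_goals first | ring1 | (left; ring1)
end

section
/- Let s, ξ, η₁, η₂ be real numbers with Δ := √(ξ² + η₁² + η₂²) > 0. Define a: ℝ → ℝ by a(τ) := (cosh(s(1+τ)Δ/√2) + (ξ/Δ)·sinh(s(1+τ)Δ/√2))^(−1/2) and z: ℝ → ℂ by z(τ) := a(τ)·(iη₁ − η₂)·sinh(s(1+τ)Δ/√2)/Δ, and let p: ℝ → M₂(ℂ) be p(τ) := [[a(τ), z(τ)], [0, a(τ)⁻¹]]. Set ε := Δ·sinh(sΔ/√2) + ξ·cosh(sΔ/√2) and a₀ := a(0). Then the matrix-valued function p is differentiable at 0, with derivative p′(0) = p(0) · (a₀²·(ε·t* + η₁·x* + η₂·y*)), where x* := (s/√2)·[[0,i],[0,0]], y* := −(s/√2)·[[0,1],[0,0]], t* := (s/(2√2))·[[−1,0],[0,1]]. -/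
open Matrix Complex

/-- The pushforward `Θᴸ d(E_s)_λ(λ)`: the curve `p(τ) = E_s((1+τ)λ)` is differentiable at
`0` (entrywise) with `p′(0) = p(0)·(a₀²(ε·t* + η₁·x* + η₂·y*))`. -/
theorem deriv_Es_curve (s ξ η₁ η₂ : ℝ) (Δ : ℝ)
    (hΔdef : Δ = Real.sqrt (ξ ^ 2 + η₁ ^ 2 + η₂ ^ 2)) (hΔ : 0 < Δ)
    (a : ℝ → ℝ)
    (ha : ∀ τ, a τ = (Real.cosh (s * (1 + τ) * Δ / Real.sqrt 2) +
        (ξ / Δ) * Real.sinh (s * (1 + τ) * Δ / Real.sqrt 2)) ^ (-(1 / 2) : ℝ))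
    (z : ℝ → ℂ)
    (hz : ∀ τ, z τ = (a τ : ℂ) * (I * η₁ - η₂) *
        Real.sinh (s * (1 + τ) * Δ / Real.sqrt 2) / Δ)
    (p : ℝ → Matrix (Fin 2) (Fin 2) ℂ)
    (hp : ∀ τ, p τ = !![(a τ : ℂ), z τ; 0, (a τ : ℂ)⁻¹])
    (ε : ℝ)
    (hε : ε = Δ * Real.sinh (s * Δ / Real.sqrt 2) + ξ * Real.cosh (s * Δ / Real.sqrt 2))
    (a₀ : ℝ) (ha₀ : a₀ = a 0)
    (xs ys ts : Matrix (Fin 2) (Fin 2) ℂ)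
    (hxs : xs = ((s : ℂ) / Real.sqrt 2) • !![0, I; 0, 0])
    (hys : ys = -(((s : ℂ) / Real.sqrt 2) • !![0, 1; 0, 0]))
    (hts : ts = ((s : ℂ) / (2 * Real.sqrt 2)) • !![-1, 0; 0, 1]) :
    ∀ i j : Fin 2,
      HasDerivAt (fun τ => p τ i j)
        ((p 0 * (((a₀ ^ 2 : ℝ) : ℂ) •
          ((ε : ℂ) • ts + (η₁ : ℂ) • xs + (η₂ : ℂ) • ys))) i j) 0 := by
  subst hε ha₀ hxs hys hts
  have hs2 : (0:ℝ) < Real.sqrt 2 := by positivity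
  have hxi : |ξ| ≤ Δ := by
    rw [hΔdef, ← Real.sqrt_sq_eq_abs]
    exact Real.sqrt_le_sqrt (by nlinarith)
  have hgd : ∀ τ : ℝ, HasDerivAt (fun τ : ℝ => s * (1 + τ) * Δ / Real.sqrt 2)
      (s * Δ / Real.sqrt 2) τ := by
    intro τ
    have h := ((((hasDerivAt_id τ).const_add (1:ℝ)).const_mul s).mul_const Δ).div_const
      (Real.sqrt 2)
    simpa using h
  have hfc : ∀ τ : ℝ, HasDerivAt (fun τ : ℝ => Real.cosh (s * (1 + τ) * Δ / Real.sqrt 2) +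
      ξ / Δ * Real.sinh (s * (1 + τ) * Δ / Real.sqrt 2))
      (Real.sinh (s * (1 + τ) * Δ / Real.sqrt 2) * (s * Δ / Real.sqrt 2) +
        ξ / Δ * (Real.cosh (s * (1 + τ) * Δ / Real.sqrt 2) * (s * Δ / Real.sqrt 2))) τ :=
    fun τ => ((hgd τ).cosh).add (((hgd τ).sinh).const_mul (ξ/Δ))
  have hpos : ∀ τ : ℝ, 0 < Real.cosh (s * (1 + τ) * Δ / Real.sqrt 2) +
      ξ / Δ * Real.sinh (s * (1 + τ) * Δ / Real.sqrt 2) := by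
    intro τ
    set t := s * (1 + τ) * Δ / Real.sqrt 2 with ht
    have h1 : |ξ / Δ * Real.sinh t| ≤ |Real.sinh t| := by
      rw [abs_mul]
      apply mul_le_of_le_one_left (abs_nonneg _)
      rw [abs_div, abs_of_pos hΔ]
      exact div_le_one_of_le₀ hxi hΔ.le
    nlinarith [Real.cosh_pos t, Real.cosh_sq t, _root_.sq_abs (Real.sinh t),
      neg_abs_le (ξ / Δ * Real.sinh t), abs_nonneg (Real.sinh t)]
  have hApos : 0 < a 0 := by
    rw [ha 0]; exact Real.rpow_pos_of_pos (hpos 0) _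
  have hA3 : (Real.cosh (s * (1 + (0:ℝ)) * Δ / Real.sqrt 2) +
      ξ / Δ * Real.sinh (s * (1 + (0:ℝ)) * Δ / Real.sqrt 2)) ^ ((-(1/2) : ℝ) - 1)
      = a 0 ^ 3 := by
    rw [ha 0, ← Real.rpow_natCast _ 3, ← Real.rpow_mul (hpos 0).le]
    norm_num
  have hA2 : a 0 ^ 2 * (Real.cosh (s * (1 + (0:ℝ)) * Δ / Real.sqrt 2) +
      ξ / Δ * Real.sinh (s * (1 + (0:ℝ)) * Δ / Real.sqrt 2)) = 1 := by
    rw [ha 0, ← Real.rpow_natCast _ 2, ← Real.rpow_mul (hpos 0).le]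
    norm_num
    rw [Real.rpow_neg_one]
    have h0 : (0:ℝ) < Real.cosh (s * Δ / Real.sqrt 2) + ξ / Δ * Real.sinh (s * Δ / Real.sqrt 2) := by
      have := hpos 0
      rwa [show s * (1 + (0:ℝ)) * Δ / Real.sqrt 2 = s * Δ / Real.sqrt 2 from by ring] at this
    exact inv_mul_cancel₀ h0.ne'
  have hA : HasDerivAt a
      ((Real.sinh (s * (1 + (0:ℝ)) * Δ / Real.sqrt 2) * (s * Δ / Real.sqrt 2) +
        ξ / Δ * (Real.cosh (s * (1 + (0:ℝ)) * Δ / Real.sqrt 2) * (s * Δ / Real.sqrt 2))) *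
        (-(1/2) : ℝ) * (a 0 ^ 3)) 0 := by
    have h := (hfc 0).rpow_const (p := (-(1/2) : ℝ)) (Or.inl (hpos 0).ne')
    rw [← hA3]
    have haf : a = fun τ => (Real.cosh (s * (1 + τ) * Δ / Real.sqrt 2) +
        (ξ / Δ) * Real.sinh (s * (1 + τ) * Δ / Real.sqrt 2)) ^ (-(1 / 2) : ℝ) := funext ha
    rw [haf]
    exact h
  have harg : s * (1 + (0:ℝ)) * Δ / Real.sqrt 2 = s * Δ / Real.sqrt 2 := by ring
  have hA' : HasDerivAt a
      (-((Δ * Real.sinh (s * Δ / Real.sqrt 2) + ξ * Real.cosh (s * Δ / Real.sqrt 2)) *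
        (s / Real.sqrt 2) * (1/2) * a 0 ^ 3)) 0 := by
    convert hA using 1
    rw [harg]
    field_simp
  have hAinv' : HasDerivAt (fun τ => (a τ)⁻¹)
      ((Δ * Real.sinh (s * Δ / Real.sqrt 2) + ξ * Real.cosh (s * Δ / Real.sqrt 2)) *
        (s / Real.sqrt 2) * (1/2) * a 0) 0 := by
    refine (hA.inv hApos.ne').congr_deriv ?_
    rw [harg]
    field_simp
  have hAC := hA'.ofReal_comp
  have hAinvC := hAinv'.ofReal_comp
  have hsinhC : HasDerivAt (fun y : ℝ => ((Real.sinh (s * (1 + y) * Δ / Real.sqrt 2) : ℝ) : ℂ))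
      (((Real.cosh (s * Δ / Real.sqrt 2) * (s * Δ / Real.sqrt 2) : ℝ)) : ℂ) 0 := by
    convert ((hgd 0).sinh).ofReal_comp using 2
    rw [harg]
  have hΔC : (Δ : ℂ) ≠ 0 := by exact_mod_cast hΔ.ne'
  have hs2C : ((Real.sqrt 2 : ℝ) : ℂ) ≠ 0 := by exact_mod_cast hs2.ne'
  have hAne : (a 0 : ℂ) ≠ 0 := by exact_mod_cast hApos.ne'
  have hΔinv : (Δ : ℂ) * ((Δ : ℂ))⁻¹ = 1 := mul_inv_cancel₀ hΔC
  have hA2' : a 0 ^ 2 * (Δ * Real.cosh (s * Δ / Real.sqrt 2) + ξ * Real.sinh (s * Δ / Real.sqrt 2)) = Δ := by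
    rw [harg] at hA2
    field_simp at hA2
    linear_combination hA2
  have hA2C' : (a 0 : ℂ) ^ 2 * ((Δ:ℂ) * Complex.cosh ((s:ℂ) * (Δ:ℂ) / ((Real.sqrt 2 : ℝ) : ℂ)) +
      (ξ:ℂ) * Complex.sinh ((s:ℂ) * (Δ:ℂ) / ((Real.sqrt 2 : ℝ) : ℂ))) = (Δ:ℂ) := by
    exact_mod_cast hA2'
  have hchC' : Complex.cosh ((s:ℂ) * (Δ:ℂ) / ((Real.sqrt 2 : ℝ) : ℂ)) ^ 2
      = Complex.sinh ((s:ℂ) * (Δ:ℂ) / ((Real.sqrt 2 : ℝ) : ℂ)) ^ 2 + 1 := by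
    exact_mod_cast Real.cosh_sq (s * Δ / Real.sqrt 2)
  have hZ : HasDerivAt (fun τ => (a τ : ℂ) * (I * η₁ - η₂) *
      Real.sinh (s * (1 + τ) * Δ / Real.sqrt 2) / Δ)
      (((-((Δ * Real.sinh (s * Δ / Real.sqrt 2) + ξ * Real.cosh (s * Δ / Real.sqrt 2)) *
        (s / Real.sqrt 2) * (1/2) * a 0 ^ 3) : ℝ) * (I * η₁ - η₂) *
          ((Real.sinh (s * (1 + (0:ℝ)) * Δ / Real.sqrt 2) : ℝ) : ℂ) +
        ((a 0 : ℝ) : ℂ) * (I * η₁ - η₂) *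
          ((Real.cosh (s * Δ / Real.sqrt 2) * (s * Δ / Real.sqrt 2) : ℝ) : ℂ)) / (Δ : ℂ)) 0 :=
    ((hAC.mul_const (I * (η₁:ℂ) - (η₂:ℂ))).mul hsinhC).div_const (Δ : ℂ)
  intro i j
  fin_cases i <;> fin_cases j
  · -- (0,0)
    simp only [hp, hz, Fin.isValue]
    simp [Matrix.mul_apply, Fin.sum_univ_two]
    convert hAC using 1
    push_cast [add_zero, mul_one]
    ring
  · -- (0,1)
    simp only [hp, hz, Fin.isValue]
    simp [Matrix.mul_apply, Fin.sum_univ_two]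
    convert hZ using 1
    · funext τ
      norm_cast
    · push_cast [add_zero, mul_one]
      linear_combination
        ((s:ℂ) * (((Real.sqrt 2 : ℝ):ℂ))⁻¹ * (I*(η₁:ℂ)-(η₂:ℂ)) * ((Δ:ℂ))⁻¹ * ((a 0 : ℝ):ℂ) *
          Complex.cosh ((s:ℂ)*(Δ:ℂ)/((Real.sqrt 2 : ℝ):ℂ))) * hA2C'
        - ((s:ℂ) * (((Real.sqrt 2 : ℝ):ℂ))⁻¹ * (I*(η₁:ℂ)-(η₂:ℂ)) * ((Δ:ℂ))⁻¹ * ((a 0 : ℝ):ℂ)^3 * (Δ:ℂ)) * hchC'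
        - ((s:ℂ) * (((Real.sqrt 2 : ℝ):ℂ))⁻¹ * (I*(η₁:ℂ)-(η₂:ℂ)) * ((a 0 : ℝ):ℂ)^3) * hΔinv
  · -- (1,0)
    simp only [hp, hz, Fin.isValue]
    simp [Matrix.mul_apply, Fin.sum_univ_two]
    exact hasDerivAt_const 0 0
  · -- (1,1)
    simp only [hp, hz, Fin.isValue]
    simp [Matrix.mul_apply, Fin.sum_univ_two]
    convert hAinvC using 1
    · funext τ
      norm_cast
    · push_cast [add_zero, mul_one]
      rw [inv_mul_eq_iff_eq_mul₀ hAne]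
      ring
end
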